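/- arXiv:1606.01848 — 2 statements merged into one kernel-verified Lean document; each statement's English description precedes it below -/
import Mathlib

section
/- For finite nonempty simple graphs G₁ and G₂, the smallest dimension admitting a faithful orthogonal representation of their join satisfies Ξ(G₁ + G₂) = Ξ(G₁) + Ξ(G₂). -/
open Module

/-- An orthogonal representation (OR) of a simple graph `G` in `ℂ^d`: an injective map from the
vertices of `G` to one-dimensional subspaces of `ℂ^d` such that adjacent vertices are mapped to
orthogonal subspaces. -/
def IsOrthRep {V : Type*} (G : SimpleGraph V) (d : ℕ)
    (φ : V → Submodule ℂ (EuclideanSpace ℂ (Fin d))) : Prop :=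
  Function.Injective φ ∧ (∀ v, Module.finrank ℂ (φ v) = 1) ∧
    ∀ u v : V, G.Adj u v → φ u ≤ (φ v)ᗮ

/-- A faithful orthogonal representation (FOR) of a simple graph `G` in `ℂ^d`: an injective map
from the vertices of `G` to one-dimensional subspaces of `ℂ^d` such that two distinct vertices
are adjacent if and only if their images are orthogonal subspaces. -/
def IsFaithfulOrthRep {V : Type*} (G : SimpleGraph V) (d : ℕ)
    (φ : V → Submodule ℂ (EuclideanSpace ℂ (Fin d))) : Prop :=
  Function.Injective φ ∧ (∀ v, Module.finrank ℂ (φ v) = 1) ∧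
    ∀ u v : V, u ≠ v → (G.Adj u v ↔ φ u ≤ (φ v)ᗮ)

/-- `G` admits an orthogonal representation in `ℂ^d`. -/
def HasOR {V : Type*} (G : SimpleGraph V) (d : ℕ) : Prop := ∃ φ, IsOrthRep G d φ

/-- `G` admits a faithful orthogonal representation in `ℂ^d`. -/
def HasFOR {V : Type*} (G : SimpleGraph V) (d : ℕ) : Prop := ∃ φ, IsFaithfulOrthRep G d φ

/-- `ξ(G)`: the smallest dimension `d` such that `G` admits an orthogonal representation
in `ℂ^d`. -/
noncomputable def xi {V : Type*} (G : SimpleGraph V) : ℕ := sInf {d | HasOR G d}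

/-- `Ξ(G)`: the smallest dimension `d` such that `G` admits a faithful orthogonal representation
in `ℂ^d`. -/
noncomputable def Xi {V : Type*} (G : SimpleGraph V) : ℕ := sInf {d | HasFOR G d}

/-- A `b`-fold coloring of `G` with `a` colors: each vertex receives a set of `b` colors out of
`a` colors such that adjacent vertices receive disjoint sets. -/
def HasFoldColoring {V : Type*} (G : SimpleGraph V) (a b : ℕ) : Prop :=
  ∃ c : V → Finset (Fin a), (∀ v, (c v).card = b) ∧
    ∀ u v : V, G.Adj u v → Disjoint (c u) (c v)

/-- The fractional chromatic number `χ_f(G)`: the infimum of `a / b` over all `b`-fold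
colorings of `G` with `a` colors. -/
noncomputable def fracChrom {V : Type*} (G : SimpleGraph V) : ℝ :=
  sInf {x : ℝ | ∃ a b : ℕ, 0 < b ∧ HasFoldColoring G a b ∧ x = (a : ℝ) / b}

/-- The join `G₁ + G₂` of two graphs: their disjoint union together with one additional edge
between every pair of vertices taken one from each graph. -/
def graphJoin {V₁ V₂ : Type*} (G₁ : SimpleGraph V₁) (G₂ : SimpleGraph V₂) :
    SimpleGraph (V₁ ⊕ V₂) :=
  (G₁ ⊕g G₂) ⊔ completeBipartiteGraph V₁ V₂

open scoped InnerProductSpace ComplexConjugate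

def GoodVecs {V : Type*} (G : SimpleGraph V) {E : Type*} [NormedAddCommGroup E]
    [InnerProductSpace ℂ E] (f : V → E) : Prop :=
  (∀ v, f v ≠ 0) ∧ (∀ u v : V, u ≠ v → ∀ c : ℂ, c • f u ≠ f v) ∧
    (∀ u v : V, u ≠ v → (G.Adj u v ↔ ⟪f u, f v⟫_ℂ = 0))

lemma goodVecs_hasFOR {V : Type*} {G : SimpleGraph V} {d : ℕ}
    {f : V → EuclideanSpace ℂ (Fin d)} (hf : GoodVecs G f) : HasFOR G d := by
  obtain ⟨h1, h2, h3⟩ := hf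
  refine ⟨fun v => ℂ ∙ f v, ?_, fun v => finrank_span_singleton (h1 v), fun u v huv => ?_⟩
  · intro u v h
    by_contra hne
    have h' : (ℂ ∙ f u) = (ℂ ∙ f v) := h
    have hv : f v ∈ ℂ ∙ f u := h' ▸ Submodule.mem_span_singleton_self _
    obtain ⟨c, hc⟩ := Submodule.mem_span_singleton.1 hv
    exact h2 u v hne c hc
  · rw [Submodule.span_singleton_le_iff_mem,
      Submodule.mem_orthogonal_singleton_iff_inner_right, inner_eq_zero_symm]
    exact h3 u v huv

lemma hasFOR_goodVecs {V : Type*} {G : SimpleGraph V} {d : ℕ} (h : HasFOR G d) :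
    ∃ f : V → EuclideanSpace ℂ (Fin d), GoodVecs G f := by
  obtain ⟨φ, hinj, hrank, hadj⟩ := h
  have hex : ∀ v, ∃ x : EuclideanSpace ℂ (Fin d), x ≠ 0 ∧ φ v = ℂ ∙ x := by
    intro v
    have hb : φ v ≠ ⊥ := by
      intro hbot
      have := hrank v
      rw [hbot] at this
      simp at this
    obtain ⟨x, hx, hx0⟩ := Submodule.exists_mem_ne_zero_of_ne_bot hb
    refine ⟨x, hx0, ?_⟩
    refine (Submodule.eq_of_le_of_finrank_eq ((Submodule.span_singleton_le_iff_mem x _).2 hx) ?_).symm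
    rw [finrank_span_singleton hx0, hrank v]
  choose f hf0 hfspan using hex
  refine ⟨f, hf0, fun u v huv c hc => ?_, fun u v huv => ?_⟩
  · apply huv
    apply hinj
    rw [hfspan u, hfspan v]
    have : f v ∈ ℂ ∙ f u := Submodule.mem_span_singleton.2 ⟨c, hc⟩
    refine (Submodule.eq_of_le_of_finrank_eq ((Submodule.span_singleton_le_iff_mem _ _).2 this) ?_).symm
    rw [finrank_span_singleton (hf0 u), finrank_span_singleton (hf0 v)]
  · rw [hadj u v huv, hfspan u, hfspan v, Submodule.span_singleton_le_iff_mem,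
      Submodule.mem_orthogonal_singleton_iff_inner_right, inner_eq_zero_symm]

lemma goodVecs_transfer {V : Type*} {G : SimpleGraph V} {E : Type*} [NormedAddCommGroup E]
    [InnerProductSpace ℂ E] [FiniteDimensional ℂ E] {f : V → E} (hf : GoodVecs G f) :
    HasFOR G (finrank ℂ E) := by
  obtain ⟨h1, h2, h3⟩ := hf
  set e := (stdOrthonormalBasis ℂ E).repr
  refine goodVecs_hasFOR (f := fun v => e (f v)) ⟨fun v hv => h1 v (by simpa using hv),
    fun u v huv c hc => h2 u v huv c (e.injective (by simpa using hc)), fun u v huv => ?_⟩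
  rw [LinearIsometryEquiv.inner_map_map]
  exact h3 u v huv


section Exist
variable {V : Type*} [Fintype V] [DecidableEq V] (G : SimpleGraph V) [DecidableRel G.Adj]

noncomputable def bvec (v : V) : EuclideanSpace ℂ (V × V) := WithLp.toLp 2 fun p : V × V =>
  if (p.1 = v ∧ p.2 = v) ∨ (p.1 = v ∧ ¬G.Adj v p.2 ∧ p.2 ≠ v) ∨
      (p.2 = v ∧ ¬G.Adj p.1 v ∧ p.1 ≠ v) then (1 : ℂ) else 0

lemma bvec_diag (v : V) : bvec G v (v, v) = 1 := by simp [bvec]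

lemma bvec_diag_ne {u v : V} (h : u ≠ v) : bvec G u (v, v) = 0 := by
  simp [bvec, h.symm]

lemma bvec_pointwise {u v : V} (h : u ≠ v) (p : V × V) :
    (starRingEnd ℂ) (bvec G u p) * bvec G v p =
      if (p = (u, v) ∨ p = (v, u)) ∧ ¬G.Adj u v then 1 else 0 := by
  obtain ⟨a, b⟩ := p
  have hsymm : G.Adj u v ↔ G.Adj v u := G.adj_comm u v
  simp only [bvec, Prod.mk.injEq]
  by_cases hau : a = u <;> by_cases hav : a = v <;> by_cases hbu : b = u <;>
    by_cases hbv : b = v <;> by_cases hAdj : G.Adj u v <;>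
    simp_all <;> tauto

set_option linter.unusedSectionVars false

lemma bvec_inner {u v : V} (h : u ≠ v) :
    ⟪bvec G u, bvec G v⟫_ℂ = if G.Adj u v then 0 else 2 := by
  have hne : ((u, v) : V × V) ≠ (v, u) := by simp [h]
  rw [PiLp.inner_apply]
  simp only [RCLike.inner_apply, mul_comm ((bvec G v).ofLp _), bvec_pointwise G h]
  by_cases hAdj : G.Adj u v
  · simp [hAdj]
  · simp only [hAdj, not_false_iff, and_true, if_neg]
    have : ∀ p : V × V, (if p = (u, v) ∨ p = (v, u) then (1 : ℂ) else 0) =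
        (if p = (u, v) then (1 : ℂ) else 0) + (if p = (v, u) then (1 : ℂ) else 0) := by
      intro p
      by_cases h1 : p = (u, v) <;> by_cases h2 : p = (v, u) <;> simp_all
    simp only [this, Finset.sum_add_distrib, Finset.sum_ite_eq', Finset.mem_univ, if_true]
    norm_num

lemma goodVecs_bvec : GoodVecs G (bvec G) := by
  refine ⟨fun v hv => ?_, fun u v huv c hc => ?_, fun u v huv => ?_⟩
  · have := congrFun (congrArg WithLp.ofLp hv) (v, v)
    rw [bvec_diag] at this
    simpa using this
  · have := congrFun (congrArg WithLp.ofLp hc) (v, v)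
    rw [PiLp.smul_apply, bvec_diag_ne G huv, bvec_diag, smul_zero] at this
    exact one_ne_zero this.symm
  · rw [bvec_inner G huv]
    constructor
    · intro hA; simp [hA]
    · intro h0
      by_contra hA
      rw [if_neg hA] at h0
      norm_num at h0

lemma exists_hasFOR' : ∃ d, HasFOR G d :=
  ⟨_, goodVecs_transfer (goodVecs_bvec G)⟩

end Exist

lemma exists_hasFOR {V : Type*} [Fintype V] (G : SimpleGraph V) : ∃ d, HasFOR G d := by
  classical exact exists_hasFOR' G

lemma graphJoin_adj_ll {V₁ V₂ : Type*} {G₁ : SimpleGraph V₁} {G₂ : SimpleGraph V₂}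
    {u v : V₁} : (graphJoin G₁ G₂).Adj (Sum.inl u) (Sum.inl v) ↔ G₁.Adj u v := by
  simp [graphJoin]

lemma graphJoin_adj_rr {V₁ V₂ : Type*} {G₁ : SimpleGraph V₁} {G₂ : SimpleGraph V₂}
    {u v : V₂} : (graphJoin G₁ G₂).Adj (Sum.inr u) (Sum.inr v) ↔ G₂.Adj u v := by
  simp [graphJoin]

lemma graphJoin_adj_lr {V₁ V₂ : Type*} {G₁ : SimpleGraph V₁} {G₂ : SimpleGraph V₂}
    {u : V₁} {v : V₂} : (graphJoin G₁ G₂).Adj (Sum.inl u) (Sum.inr v) := by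
  simp [graphJoin]

section Join
variable {V₁ V₂ : Type*} {G₁ : SimpleGraph V₁} {G₂ : SimpleGraph V₂} {d₁ d₂ : ℕ}

noncomputable def joinVec (f₁ : V₁ → EuclideanSpace ℂ (Fin d₁))
    (f₂ : V₂ → EuclideanSpace ℂ (Fin d₂)) :
    V₁ ⊕ V₂ → EuclideanSpace ℂ (Fin d₁ ⊕ Fin d₂) := fun x =>
  match x with
  | Sum.inl v => WithLp.toLp 2 (Sum.elim (f₁ v).ofLp (0 : Fin d₂ → ℂ))
  | Sum.inr v => WithLp.toLp 2 (Sum.elim (0 : Fin d₁ → ℂ) (f₂ v).ofLp)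

lemma goodVecs_join {f₁ : V₁ → EuclideanSpace ℂ (Fin d₁)} {f₂ : V₂ → EuclideanSpace ℂ (Fin d₂)}
    (h₁ : GoodVecs G₁ f₁) (h₂ : GoodVecs G₂ f₂) :
    GoodVecs (graphJoin G₁ G₂) (joinVec f₁ f₂) := by
  obtain ⟨h11, h12, h13⟩ := h₁
  obtain ⟨h21, h22, h23⟩ := h₂
  have innll : ∀ (u v : V₁), ⟪joinVec f₁ f₂ (Sum.inl u), joinVec f₁ f₂ (Sum.inl v)⟫_ℂ
      = ⟪f₁ u, f₁ v⟫_ℂ := by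
    intro u v
    rw [PiLp.inner_apply, PiLp.inner_apply, Fintype.sum_sum_type]
    simp [joinVec]
  have innrr : ∀ (u v : V₂), ⟪joinVec f₁ f₂ (Sum.inr u), joinVec f₁ f₂ (Sum.inr v)⟫_ℂ
      = ⟪f₂ u, f₂ v⟫_ℂ := by
    intro u v
    rw [PiLp.inner_apply, PiLp.inner_apply, Fintype.sum_sum_type]
    simp [joinVec]
  have innlr : ∀ (u : V₁) (v : V₂), ⟪joinVec f₁ f₂ (Sum.inl u), joinVec f₁ f₂ (Sum.inr v)⟫_ℂ
      = 0 := by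
    intro u v
    rw [PiLp.inner_apply, Fintype.sum_sum_type]
    simp [joinVec]
  refine ⟨?_, ?_, ?_⟩
  · rintro (v | v) hv
    · exact h11 v (PiLp.ext fun i => by simpa [joinVec] using congrFun (congrArg WithLp.ofLp hv) (Sum.inl i))
    · exact h21 v (PiLp.ext fun i => by simpa [joinVec] using congrFun (congrArg WithLp.ofLp hv) (Sum.inr i))
  · rintro (u | u) (v | v) huv c hc
    · refine h12 u v (by simpa using huv) c (PiLp.ext fun i => ?_)
      simpa [joinVec] using congrFun (congrArg WithLp.ofLp hc) (Sum.inl i)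
    · refine h21 v (PiLp.ext fun i => ?_)
      have := congrFun (congrArg WithLp.ofLp hc) (Sum.inr i)
      simpa [joinVec] using this.symm
    · refine h11 v (PiLp.ext fun i => ?_)
      have := congrFun (congrArg WithLp.ofLp hc) (Sum.inl i)
      simpa [joinVec] using this.symm
    · refine h22 u v (by simpa using huv) c (PiLp.ext fun i => ?_)
      simpa [joinVec] using congrFun (congrArg WithLp.ofLp hc) (Sum.inr i)
  · rintro (u | u) (v | v) huv
    · rw [graphJoin_adj_ll, innll]
      exact h13 u v (by simpa using huv)
    · simp [graphJoin_adj_lr, innlr]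
    · rw [inner_eq_zero_symm]
      simp only [innlr v u]
      simpa using (graphJoin_adj_lr (u := v) (v := u)).symm
    · rw [graphJoin_adj_rr, innrr]
      exact h23 u v (by simpa using huv)

lemma hasFOR_join (h₁ : HasFOR G₁ d₁) (h₂ : HasFOR G₂ d₂) :
    HasFOR (graphJoin G₁ G₂) (d₁ + d₂) := by
  obtain ⟨f₁, hf₁⟩ := hasFOR_goodVecs h₁
  obtain ⟨f₂, hf₂⟩ := hasFOR_goodVecs h₂
  have := goodVecs_transfer (goodVecs_join hf₁ hf₂)
  have hrk : finrank ℂ (EuclideanSpace ℂ (Fin d₁ ⊕ Fin d₂)) = d₁ + d₂ := by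
    simp [finrank_euclideanSpace]
  rwa [hrk] at this

end Join

set_option maxHeartbeats 1000000 in
lemma hasFOR_split {V₁ V₂ : Type*} {G₁ : SimpleGraph V₁} {G₂ : SimpleGraph V₂} {d : ℕ}
    (h : HasFOR (graphJoin G₁ G₂) d) :
    ∃ d₁ d₂ : ℕ, d₁ + d₂ ≤ d ∧ HasFOR G₁ d₁ ∧ HasFOR G₂ d₂ := by
  obtain ⟨f, h1, h2, h3⟩ := hasFOR_goodVecs h
  set W₁ : Submodule ℂ (EuclideanSpace ℂ (Fin d)) :=
    Submodule.span ℂ (Set.range fun v => f (Sum.inl v)) with hW₁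
  set W₂ : Submodule ℂ (EuclideanSpace ℂ (Fin d)) :=
    Submodule.span ℂ (Set.range fun v => f (Sum.inr v)) with hW₂
  have hortho : W₁ ⟂ W₂ := by
    rw [hW₁, hW₂, Submodule.isOrtho_span]
    rintro x ⟨u, rfl⟩ y ⟨v, rfl⟩
    exact (h3 (Sum.inl u) (Sum.inr v) (by simp)).1 graphJoin_adj_lr
  have hmem₁ : ∀ v, f (Sum.inl v) ∈ W₁ := fun v => Submodule.subset_span ⟨v, rfl⟩
  have hmem₂ : ∀ v, f (Sum.inr v) ∈ W₂ := fun v => Submodule.subset_span ⟨v, rfl⟩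
  have hg₁ : GoodVecs G₁ (fun v => (⟨f (Sum.inl v), hmem₁ v⟩ : W₁)) := by
    refine ⟨?_, ?_, ?_⟩
    · intro v hv
      exact h1 (Sum.inl v) (congrArg Subtype.val hv)
    · intro u v huv c hc
      apply h2 (Sum.inl u) (Sum.inl v) (fun hh => huv (Sum.inl.inj hh)) c
      exact congrArg Subtype.val hc
    · intro u v huv
      have hiff := h3 (Sum.inl u) (Sum.inl v) (fun hh => huv (Sum.inl.inj hh))
      rw [graphJoin_adj_ll] at hiff
      rw [Submodule.coe_inner]
      exact hiff
  have hg₂ : GoodVecs G₂ (fun v => (⟨f (Sum.inr v), hmem₂ v⟩ : W₂)) := by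
    refine ⟨?_, ?_, ?_⟩
    · intro v hv
      exact h1 (Sum.inr v) (congrArg Subtype.val hv)
    · intro u v huv c hc
      apply h2 (Sum.inr u) (Sum.inr v) (fun hh => huv (Sum.inr.inj hh)) c
      exact congrArg Subtype.val hc
    · intro u v huv
      have hiff := h3 (Sum.inr u) (Sum.inr v) (fun hh => huv (Sum.inr.inj hh))
      rw [graphJoin_adj_rr] at hiff
      rw [Submodule.coe_inner]
      exact hiff
  have hF₁ := goodVecs_transfer hg₁
  have hF₂ := goodVecs_transfer hg₂
  refine ⟨finrank ℂ W₁, finrank ℂ W₂, ?_, hF₁, hF₂⟩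
  have hle : finrank ℂ W₁ ≤ finrank ℂ W₂ᗮ := Submodule.finrank_mono hortho.le
  have hsum := Submodule.finrank_add_finrank_orthogonal W₂
  rw [finrank_euclideanSpace_fin] at hsum
  omega

theorem stmt8' {V₁ V₂ : Type*} [Fintype V₁] [Fintype V₂] [Nonempty V₁] [Nonempty V₂]
    (G₁ : SimpleGraph V₁) (G₂ : SimpleGraph V₂) :
    sInf {d | HasFOR (graphJoin G₁ G₂) d} = sInf {d | HasFOR G₁ d} + sInf {d | HasFOR G₂ d} := by
  have hne₁ : {d | HasFOR G₁ d}.Nonempty := exists_hasFOR G₁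
  have hne₂ : {d | HasFOR G₂ d}.Nonempty := exists_hasFOR G₂
  have hm₁ : HasFOR G₁ (sInf {d | HasFOR G₁ d}) := Nat.sInf_mem hne₁
  have hm₂ : HasFOR G₂ (sInf {d | HasFOR G₂ d}) := Nat.sInf_mem hne₂
  have hj : HasFOR (graphJoin G₁ G₂) (sInf {d | HasFOR G₁ d} + sInf {d | HasFOR G₂ d}) :=
    hasFOR_join hm₁ hm₂
  refine le_antisymm (Nat.sInf_le hj) (le_csInf ⟨_, hj⟩ ?_)
  rintro b hb
  obtain ⟨d₁, d₂, hle, hb₁, hb₂⟩ := hasFOR_split hb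
  have h₁ := Nat.sInf_le (s := {d | HasFOR G₁ d}) hb₁
  have h₂ := Nat.sInf_le (s := {d | HasFOR G₂ d}) hb₂
  omega

/-- For finite nonempty simple graphs `G₁` and `G₂`,
`Ξ(G₁ + G₂) = Ξ(G₁) + Ξ(G₂)`. -/
theorem stmt8 {V₁ V₂ : Type*} [Fintype V₁] [Fintype V₂] [Nonempty V₁] [Nonempty V₂]
    (G₁ : SimpleGraph V₁) (G₂ : SimpleGraph V₂) :
    Xi (graphJoin G₁ G₂) = Xi G₁ + Xi G₂ :=
  stmt8' G₁ G₂
end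

section
/- Let G be a finite simple graph such that G or its complement is disconnected, and suppose χ_f(G) > Ξ(G). Then G has a proper induced subgraph S with χ_f(S) > Ξ(S). -/
open Module

open Matrix Finset

open Matrix Finset in
/-- Auxiliary: vector form of a faithful orthogonal representation. -/
def VecFOR {V : Type*} (G : SimpleGraph V) (d : ℕ) (f : V → EuclideanSpace ℂ (Fin d)) : Prop :=
  (∀ v, f v ≠ 0) ∧ (Function.Injective fun v => (ℂ ∙ f v)) ∧
    ∀ u v : V, u ≠ v → (G.Adj u v ↔ (inner ℂ (f u) (f v) : ℂ) = 0)

lemma submodule_rank_one {d : ℕ} (W : Submodule ℂ (EuclideanSpace ℂ (Fin d)))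
    (h : finrank ℂ W = 1) : ∃ x : EuclideanSpace ℂ (Fin d), x ≠ 0 ∧ W = ℂ ∙ x := by
  have hP : W.IsPrincipal := W.finrank_le_one_iff_isPrincipal.mp h.le
  obtain ⟨x, hx⟩ := hP
  refine ⟨x, ?_, hx⟩
  intro h0; subst h0; rw [hx] at h
  rw [Submodule.span_zero_singleton] at h
  simp [finrank_bot] at h

lemma span_le_orth_iff {d : ℕ} (x y : EuclideanSpace ℂ (Fin d)) :
    (ℂ ∙ x) ≤ (ℂ ∙ y)ᗮ ↔ (inner ℂ x y : ℂ) = 0 := by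
  rw [Submodule.span_singleton_le_iff_mem, Submodule.mem_orthogonal_singleton_iff_inner_right,
    inner_eq_zero_symm]

lemma hasFOR_iff_vec {V : Type*} (G : SimpleGraph V) (d : ℕ) :
    HasFOR G d ↔ ∃ f, VecFOR G d f := by
  constructor
  · rintro ⟨φ, hinj, hrk, hadj⟩
    choose f hf0 hfspan using fun v => submodule_rank_one (φ v) (hrk v)
    refine ⟨f, hf0, ?_, ?_⟩
    · intro u v huv
      apply hinj
      rw [hfspan u, hfspan v]
      exact huv
    · intro u v huv
      rw [hadj u v huv, hfspan u, hfspan v, span_le_orth_iff]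
  · rintro ⟨f, hf0, hinj, hadj⟩
    refine ⟨fun v => ℂ ∙ f v, hinj, fun v => finrank_span_singleton (hf0 v), ?_⟩
    intro u v huv
    rw [hadj u v huv, span_le_orth_iff]

open scoped MatrixOrder in
lemma hasFOR_card {V : Type*} [Fintype V] (G : SimpleGraph V) :
    HasFOR G (Fintype.card V) := by
  classical
  rw [hasFOR_iff_vec]
  set n := Fintype.card V with hn
  let e : V ≃ Fin n := Fintype.equivFin V
  let p : Fin n → Fin n → ℝ := fun i j => if G.Adj (e.symm i) (e.symm j) then 0 else 1
  have hp01 : ∀ i j, p i j = 0 ∨ p i j = 1 := by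
    intro i j; by_cases h : G.Adj (e.symm i) (e.symm j) <;> simp [p, h]
  let M : Matrix (Fin n) (Fin n) ℝ :=
    Matrix.of (fun i j => (n:ℝ) * (if i = j then 1 else 0) + p i j)
  have hpsymm : ∀ i j, p i j = p j i := by
    intro i j; simp only [p, SimpleGraph.adj_comm]
  have hMsym : M.IsHermitian := by
    ext i j
    simp only [Matrix.conjTranspose_apply, M, Matrix.of_apply, star_trivial]
    rw [hpsymm j i]
    by_cases h : i = j <;> simp [h, Ne.symm]
  have hquad : ∀ x : Fin n → ℝ, star x ⬝ᵥ M *ᵥ x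
      = (n:ℝ) * ∑ i, x i ^ 2 + ∑ i, ∑ j, p i j * (x i * x j) := by
    intro x
    simp only [star_trivial, dotProduct, Matrix.mulVec, Matrix.of_apply,
      dotProduct, add_mul, Finset.sum_add_distrib, Finset.mul_sum, mul_add, M]
    rw [← Finset.sum_add_distrib, ← Finset.sum_add_distrib]
    refine Finset.sum_congr rfl fun i _ => ?_
    congr 1
    · rw [Finset.sum_eq_single i]
      · simp [sq]; ring
      · intro j _ hj; simp [Ne.symm hj]
      · simp
    · exact Finset.sum_congr rfl fun j _ => by ring
  have hMpsd : M.PosSemidef := by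
    refine Matrix.PosSemidef.of_dotProduct_mulVec_nonneg hMsym fun x => ?_
    rw [hquad x]
    have hq1 : ∑ i, ∑ j, -(|x i| * |x j|) ≤ ∑ i, ∑ j, p i j * (x i * x j) := by
      refine Finset.sum_le_sum fun i _ => Finset.sum_le_sum fun j _ => ?_
      rcases hp01 i j with h | h
      · rw [h, zero_mul]
        exact neg_nonpos_of_nonneg (mul_nonneg (abs_nonneg _) (abs_nonneg _))
      · rw [h, one_mul, ← abs_mul]
        exact neg_abs_le _
    have hq2 : ∑ i, ∑ j, -(|x i| * |x j|) = -((∑ i, |x i|) ^ 2) := by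
      rw [sq, Finset.sum_mul_sum, ← Finset.sum_neg_distrib]
      exact Finset.sum_congr rfl fun i _ => by rw [← Finset.sum_neg_distrib]
    have hq3 : (∑ i, |x i|) ^ 2 ≤ (n : ℝ) * ∑ i, |x i| ^ 2 := by
      have := sq_sum_le_card_mul_sum_sq (s := (Finset.univ : Finset (Fin n)))
        (f := fun i => |x i|)
      simpa using this
    have hq4 : -((n:ℝ) * ∑ i, x i ^ 2) ≤ ∑ i, ∑ j, p i j * (x i * x j) := by
      refine le_trans ?_ hq1
      rw [hq2, neg_le_neg_iff]
      simpa [sq_abs] using hq3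
    linarith
  set B := CFC.sqrt M with hB
  have hBB : B * B = M := CFC.sqrt_mul_sqrt_self M hMpsd.nonneg
  have hBsym : ∀ i j, B i j = B j i := by
    intro i j
    have := (CFC.sqrt_nonneg M).posSemidef.isHermitian.apply i j
    simpa using this.symm
  have hMdiag : ∀ v : V, M (e v) (e v) = (n:ℝ) + 1 := by
    intro v; simp [M, p]
  have hMval : ∀ u v : V, u ≠ v → M (e u) (e v) = if G.Adj u v then 0 else 1 := by
    intro u v huv
    have : e u ≠ e v := fun h => huv (e.injective h)
    simp [M, p, this]
  let f : V → EuclideanSpace ℂ (Fin n) := fun v => WithLp.toLp 2 (fun i => ((B i (e v) : ℝ) : ℂ))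
  have hinner : ∀ u v : V, (inner ℂ (f u) (f v) : ℂ) = ((M (e u) (e v) : ℝ) : ℂ) := by
    intro u v
    rw [PiLp.inner_apply]
    have hterm : ∀ i : Fin n, (inner ℂ (f u i) (f v i) : ℂ)
        = ((B i (e u) * B i (e v) : ℝ) : ℂ) := by
      intro i
      simp only [RCLike.inner_apply, f, PiLp.toLp_apply, Complex.conj_ofReal]
      push_cast
      ring
    rw [Finset.sum_congr rfl fun i _ => hterm i, ← Complex.ofReal_sum]
    congr 1
    have hM : M (e u) (e v) = (B * B) (e u) (e v) := by rw [hBB]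
    rw [hM, Matrix.mul_apply]
    exact Finset.sum_congr rfl fun i _ => by rw [hBsym (e u) i]
  have hfd : ∀ v : V, (inner ℂ (f v) (f v) : ℂ) = (((n:ℝ) + 1 : ℝ) : ℂ) := by
    intro v; rw [hinner v v, hMdiag v]
  have hf0 : ∀ v, f v ≠ 0 := by
    intro v h0
    have h := hfd v
    rw [h0, inner_zero_left] at h
    have h' : ((n:ℝ) + 1 : ℝ) = 0 := by exact_mod_cast h.symm
    nlinarith [h', Nat.cast_nonneg (α := ℝ) n]
  refine ⟨f, hf0, ?_, ?_⟩
  · intro u v h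
    by_contra huv
    have h' : (ℂ ∙ f u) = (ℂ ∙ f v) := h
    have hmem : f u ∈ (ℂ ∙ f v) := h' ▸ Submodule.mem_span_singleton_self (f u)
    obtain ⟨c, hc⟩ := Submodule.mem_span_singleton.mp hmem
    have hmle : |M (e v) (e u)| ≤ 1 := by
      rw [hMval v u (Ne.symm huv)]
      by_cases hadj : G.Adj v u <;> simp [hadj]
    have h1 : ((M (e v) (e u) : ℝ) : ℂ) = c * (((n:ℝ) + 1 : ℝ) : ℂ) := by
      rw [← hinner v u, ← hc, inner_smul_right, hfd v]
    have h3 : (((n:ℝ) + 1 : ℝ) : ℂ)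
        = (starRingEnd ℂ) c * (c * (((n:ℝ) + 1 : ℝ) : ℂ)) := by
      conv_lhs => rw [← hfd u]
      rw [← hc, inner_smul_left, inner_smul_right, hfd v]
    have ha1 : |M (e v) (e u)| = ‖c‖ * ((n:ℝ) + 1) := by
      have hh := congrArg norm h1
      rw [Complex.norm_real, Real.norm_eq_abs] at hh
      rw [hh, norm_mul, Complex.norm_real, Real.norm_eq_abs,
        abs_of_nonneg (by positivity : (0:ℝ) ≤ (n:ℝ)+1)]
    have ha3 : (n:ℝ) + 1 = ‖c‖ * (‖c‖ * ((n:ℝ) + 1)) := by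
      have hh := congrArg norm h3
      rw [Complex.norm_real, Real.norm_eq_abs, norm_mul, norm_mul,
        Complex.norm_conj, Complex.norm_real, Real.norm_eq_abs,
        abs_of_nonneg (by positivity : (0:ℝ) ≤ (n:ℝ)+1)] at hh
      exact hh
    have hn1 : 1 ≤ n := Fintype.card_pos_iff.mpr ⟨u⟩
    have hn1r : (1:ℝ) ≤ (n:ℝ) := by exact_mod_cast hn1
    have hc0 : 0 ≤ ‖c‖ := norm_nonneg c
    nlinarith [sq_nonneg (‖c‖ - 1), sq_nonneg (‖c‖ + 1),
      abs_nonneg (M (e v) (e u))]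
  · intro u v huv
    rw [hinner u v, hMval u v huv]
    constructor
    · intro hadj; simp [hadj]
    · intro hz
      by_contra hadj
      rw [if_neg hadj] at hz
      simp at hz

lemma hasFOR_induce {V : Type*} (G : SimpleGraph V) (s : Set V) (d : ℕ)
    (h : HasFOR G d) : HasFOR (G.induce s) d := by
  rw [hasFOR_iff_vec] at h ⊢
  obtain ⟨f, hf0, hinj, hadj⟩ := h
  refine ⟨fun v => f v, fun v => hf0 v, ?_, ?_⟩
  · intro u v huv
    exact Subtype.ext (hinj huv)
  · intro u v huv
    have h2 : (u : V) ≠ v := fun h => huv (Subtype.ext h)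
    simpa using hadj u v h2

lemma hasFOR_Xi {V : Type*} [Fintype V] (G : SimpleGraph V) : HasFOR G (Xi G) :=
  Nat.sInf_mem (s := {d | HasFOR G d}) ⟨_, hasFOR_card G⟩

lemma Xi_induce_le {V : Type*} [Fintype V] (G : SimpleGraph V) (s : Set V) :
    Xi (G.induce s) ≤ Xi G :=
  Nat.sInf_le (hasFOR_induce G s _ (hasFOR_Xi G))

set_option maxHeartbeats 1000000 in
lemma hasFOR_of_sub {V : Type*} (G : SimpleGraph V) {d : ℕ}
    (W : Submodule ℂ (EuclideanSpace ℂ (Fin d)))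
    (f : V → EuclideanSpace ℂ (Fin d)) (hmem : ∀ v, f v ∈ W)
    (hf0 : ∀ v, f v ≠ 0) (hinj : Function.Injective fun v => (ℂ ∙ f v))
    (hadj : ∀ u v : V, u ≠ v → (G.Adj u v ↔ (inner ℂ (f u) (f v) : ℂ) = 0)) :
    HasFOR G (finrank ℂ W) := by
  letI : InnerProductSpace ℂ W := Submodule.innerProductSpace W
  rw [hasFOR_iff_vec]
  let T := (stdOrthonormalBasis ℂ W).repr
  let g : V → EuclideanSpace ℂ (Fin (finrank ℂ W)) := fun v => T ⟨f v, hmem v⟩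
  have hginner : ∀ u v : V, (inner ℂ (g u) (g v) : ℂ) = inner ℂ (f u) (f v) := by
    intro u v
    have h := T.inner_map_map (⟨f u, hmem u⟩ : W) (⟨f v, hmem v⟩ : W)
    rw [W.coe_inner] at h
    exact h
  refine ⟨g, ?_, ?_, ?_⟩
  · intro v h0
    apply hf0 v
    have h1 : (⟨f v, hmem v⟩ : W) = 0 := by
      apply T.injective; simpa [g, map_zero] using h0
    exact congrArg Subtype.val h1
  · intro u v h
    have h' : (ℂ ∙ g u) = ℂ ∙ g v := h
    have hgmem : g u ∈ (ℂ ∙ g v) := h' ▸ Submodule.mem_span_singleton_self _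
    obtain ⟨c, hc⟩ := Submodule.mem_span_singleton.mp hgmem
    have hfu : f u = c • f v := by
      have h2 : (⟨f u, hmem u⟩ : W) = c • (⟨f v, hmem v⟩ : W) := by
        apply T.injective
        rw [T.map_smul]
        exact hc.symm
      have := congrArg Subtype.val h2
      simpa using this
    have hc0 : c ≠ 0 := fun h0 => hf0 u (by rw [hfu, h0, zero_smul])
    apply hinj
    show (ℂ ∙ f u) = ℂ ∙ f v
    rw [hfu]
    exact Submodule.span_singleton_smul_eq (IsUnit.mk0 c hc0) _
  · intro u v huv
    rw [hadj u v huv, hginner u v]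

lemma xi_join_lower {V : Type*} [Fintype V] (G : SimpleGraph V) (s : Set V)
    (hcross : ∀ u v : V, u ∈ s → v ∉ s → G.Adj u v) :
    Xi (G.induce s) + Xi (G.induce sᶜ) ≤ Xi G := by
  classical
  obtain ⟨f, hf0, hinj, hadj⟩ := (hasFOR_iff_vec G (Xi G)).mp (hasFOR_Xi G)
  let W : Submodule ℂ (EuclideanSpace ℂ (Fin (Xi G))) := Submodule.span ℂ (f '' sᶜ)
  have hmem2 : ∀ v : (sᶜ : Set V), f v ∈ W := fun v =>
    Submodule.subset_span ⟨v, v.2, rfl⟩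
  have hmem1 : ∀ u : (s : Set V), f u ∈ Wᗮ := by
    intro u
    have hle : W ≤ (ℂ ∙ f u)ᗮ := by
      rw [Submodule.span_le]
      rintro - ⟨v, hv, rfl⟩
      rw [SetLike.mem_coe, Submodule.mem_orthogonal_singleton_iff_inner_right]
      have hne : (u : V) ≠ v := fun h => hv (h ▸ u.2)
      exact (hadj u v hne).mp (hcross u v u.2 hv)
    exact Submodule.orthogonal_le hle
      (Submodule.le_orthogonal_orthogonal _ (Submodule.mem_span_singleton_self _))
  have h1 : HasFOR (G.induce s) (finrank ℂ Wᗮ) := by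
    refine hasFOR_of_sub _ Wᗮ (fun u => f u) hmem1 (fun u => hf0 u) ?_ ?_
    · intro u v huv
      exact Subtype.ext (hinj huv)
    · intro u v huv
      have h2 : (u : V) ≠ v := fun h => huv (Subtype.ext h)
      simpa using hadj u v h2
  have h2 : HasFOR (G.induce sᶜ) (finrank ℂ W) := by
    refine hasFOR_of_sub _ W (fun v => f v) hmem2 (fun v => hf0 v) ?_ ?_
    · intro u v huv
      exact Subtype.ext (hinj huv)
    · intro u v huv
      have h2 : (u : V) ≠ v := fun h => huv (Subtype.ext h)
      simpa using hadj u v h2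
  have hx1 : Xi (G.induce s) ≤ finrank ℂ Wᗮ := Nat.sInf_le h1
  have hx2 : Xi (G.induce sᶜ) ≤ finrank ℂ W := Nat.sInf_le h2
  have hsum : finrank ℂ W + finrank ℂ Wᗮ = Xi G := by
    rw [Submodule.finrank_add_finrank_orthogonal]
    simp [finrank_euclideanSpace_fin]
  omega

lemma hasFold_trivial {V : Type*} [Fintype V] (G : SimpleGraph V) :
    HasFoldColoring G (Fintype.card V) 1 := by
  classical
  refine ⟨fun v => {Fintype.equivFin V v}, fun v => rfl, fun u v huv => ?_⟩
  rw [Finset.disjoint_singleton]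
  exact fun h => huv.ne ((Fintype.equivFin V).injective h)

lemma fold_mono {V : Type*} (G : SimpleGraph V) {a a' b : ℕ} (haa : a ≤ a')
    (h : HasFoldColoring G a b) : HasFoldColoring G a' b := by
  obtain ⟨c, hcard, hdisj⟩ := h
  refine ⟨fun v => (c v).map (Fin.castLEEmb haa), fun v => by simp [hcard v], ?_⟩
  intro u v huv
  rw [Finset.disjoint_map]
  exact hdisj u v huv

lemma fold_blowup {V : Type*} (G : SimpleGraph V) {a b : ℕ} (k : ℕ)
    (h : HasFoldColoring G a b) : HasFoldColoring G (a * k) (b * k) := by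
  obtain ⟨c, hcard, hdisj⟩ := h
  refine ⟨fun v => ((c v) ×ˢ (Finset.univ : Finset (Fin k))).map
    finProdFinEquiv.toEmbedding, fun v => by simp [hcard v], ?_⟩
  intro u v huv
  rw [Finset.disjoint_map]
  rw [Finset.disjoint_left]
  rintro ⟨x, y⟩ hx hy
  rw [Finset.mem_product] at hx hy
  exact (Finset.disjoint_left.mp (hdisj u v huv)) hx.1 hy.1

lemma fold_union {V : Type*} (G : SimpleGraph V) (s : Set V)
    (hcross : ∀ u v : V, u ∈ s → v ∉ s → ¬ G.Adj u v) {a b : ℕ}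
    (h1 : HasFoldColoring (G.induce s) a b) (h2 : HasFoldColoring (G.induce sᶜ) a b) :
    HasFoldColoring G a b := by
  classical
  obtain ⟨c1, hcard1, hdisj1⟩ := h1
  obtain ⟨c2, hcard2, hdisj2⟩ := h2
  refine ⟨fun v => if h : v ∈ s then c1 ⟨v, h⟩ else c2 ⟨v, h⟩, fun v => ?_, ?_⟩
  · by_cases h : v ∈ s <;> simp [h, hcard1, hcard2]
  · intro u v huv
    by_cases hu : u ∈ s <;> by_cases hv : v ∈ s
    · simpa [hu, hv] using hdisj1 ⟨u, hu⟩ ⟨v, hv⟩ (by simpa using huv)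
    · exact absurd huv (hcross u v hu hv)
    · exact absurd huv.symm (hcross v u hv hu)
    · simpa [hu, hv] using hdisj2 ⟨u, hu⟩ ⟨v, hv⟩ (by simpa using huv)

lemma fold_join {V : Type*} (G : SimpleGraph V) (s : Set V) {a1 a2 b : ℕ}
    (h1 : HasFoldColoring (G.induce s) a1 b) (h2 : HasFoldColoring (G.induce sᶜ) a2 b) :
    HasFoldColoring G (a1 + a2) b := by
  classical
  obtain ⟨c1, hcard1, hdisj1⟩ := h1
  obtain ⟨c2, hcard2, hdisj2⟩ := h2
  refine ⟨fun v => if h : v ∈ s then (c1 ⟨v, h⟩).map (Fin.castAddEmb a2)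
    else (c2 ⟨v, h⟩).map (Fin.natAddEmb a1), fun v => ?_, ?_⟩
  · by_cases h : v ∈ s <;> simp [h, hcard1, hcard2]
  · have hcr : ∀ (x : Finset (Fin a1)) (y : Finset (Fin a2)),
        Disjoint (x.map (Fin.castAddEmb a2)) (y.map (Fin.natAddEmb a1)) := by
      intro x y
      rw [Finset.disjoint_left]
      rintro z hz hz'
      obtain ⟨p, -, rfl⟩ := Finset.mem_map.mp hz
      obtain ⟨q, -, hq⟩ := Finset.mem_map.mp hz'
      have h1' : ((Fin.castAddEmb a2 p : Fin (a1 + a2)) : ℕ) = (p : ℕ) := rfl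
      have h2' : ((Fin.natAddEmb a1 q : Fin (a1 + a2)) : ℕ) = a1 + (q : ℕ) := rfl
      have := congrArg (fun z : Fin (a1 + a2) => (z : ℕ)) hq
      simp only [h1', h2'] at this
      omega
    intro u v huv
    by_cases hu : u ∈ s <;> by_cases hv : v ∈ s
    · simp only [hu, hv, dif_pos]
      rw [Finset.disjoint_map]
      exact hdisj1 ⟨u, hu⟩ ⟨v, hv⟩ (by simpa using huv)
    · simpa [hu, hv] using hcr _ _
    · simpa [hu, hv] using (hcr _ _).symm
    · simp only [hu, hv, dif_neg, not_false_iff]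
      rw [Finset.disjoint_map]
      exact hdisj2 ⟨u, hu⟩ ⟨v, hv⟩ (by simpa using huv)

lemma fracSet_nonempty {V : Type*} [Fintype V] (G : SimpleGraph V) :
    {x : ℝ | ∃ a b : ℕ, 0 < b ∧ HasFoldColoring G a b ∧ x = (a : ℝ) / b}.Nonempty :=
  ⟨(Fintype.card V : ℝ) / 1, Fintype.card V, 1, one_pos, hasFold_trivial G, by norm_num⟩

lemma fracSet_bddBelow {V : Type*} (G : SimpleGraph V) :
    BddBelow {x : ℝ | ∃ a b : ℕ, 0 < b ∧ HasFoldColoring G a b ∧ x = (a : ℝ) / b} := by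
  refine ⟨0, fun x hx => ?_⟩
  obtain ⟨a, b, hb, -, rfl⟩ := hx
  positivity

lemma fracChrom_le {V : Type*} (G : SimpleGraph V) {a b : ℕ} (hb : 0 < b)
    (h : HasFoldColoring G a b) : fracChrom G ≤ (a : ℝ) / b :=
  csInf_le (fracSet_bddBelow G) ⟨a, b, hb, h, rfl⟩

lemma fracChrom_union_le {V : Type*} [Fintype V] (G : SimpleGraph V) (s : Set V)
    (hcross : ∀ u v : V, u ∈ s → v ∉ s → ¬ G.Adj u v) :
    fracChrom G ≤ max (fracChrom (G.induce s)) (fracChrom (G.induce sᶜ)) := by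
  classical
  refine le_of_forall_pos_le_add fun ε hε => ?_
  obtain ⟨x1, hx1, hlt1⟩ := Real.lt_sInf_add_pos (fracSet_nonempty (G.induce s)) hε
  obtain ⟨x2, hx2, hlt2⟩ := Real.lt_sInf_add_pos (fracSet_nonempty (G.induce sᶜ)) hε
  obtain ⟨a1, b1, hb1, hc1, rfl⟩ := hx1
  obtain ⟨a2, b2, hb2, hc2, rfl⟩ := hx2
  have h1 : HasFoldColoring (G.induce s) (a1 * b2) (b1 * b2) := fold_blowup _ _ hc1
  have h2 : HasFoldColoring (G.induce sᶜ) (a2 * b1) (b1 * b2) := by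
    rw [mul_comm b1 b2]; exact fold_blowup _ _ hc2
  have hcomb := fold_union G s hcross
    (fold_mono _ (le_max_left (a1 * b2) (a2 * b1)) h1)
    (fold_mono _ (le_max_right (a1 * b2) (a2 * b1)) h2)
  have hb : 0 < b1 * b2 := Nat.mul_pos hb1 hb2
  refine (fracChrom_le G hb hcomb).trans ?_
  have hb1' : (0:ℝ) < b1 := by exact_mod_cast hb1
  have hb2' : (0:ℝ) < b2 := by exact_mod_cast hb2
  have hval : ((max (a1 * b2) (a2 * b1) : ℕ) : ℝ) / ((b1 * b2 : ℕ) : ℝ)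
      = max ((a1:ℝ)/b1) ((a2:ℝ)/b2) := by
    rw [Nat.cast_max]
    push_cast
    rw [div_eq_iff (by positivity)]
    rw [max_mul_of_nonneg _ _ (by positivity : (0:ℝ) ≤ (b1:ℝ)*b2)]
    congr 1 <;> field_simp <;> ring
  rw [hval]
  have hs1 : (a1:ℝ)/b1 < fracChrom (G.induce s) + ε := hlt1
  have hs2 : (a2:ℝ)/b2 < fracChrom (G.induce sᶜ) + ε := hlt2
  apply max_le
  · exact hs1.le.trans (by gcongr; exact le_max_left _ _)
  · exact hs2.le.trans (by gcongr; exact le_max_right _ _)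

lemma fracChrom_join_le {V : Type*} [Fintype V] (G : SimpleGraph V) (s : Set V) :
    fracChrom G ≤ fracChrom (G.induce s) + fracChrom (G.induce sᶜ) := by
  classical
  refine le_of_forall_pos_le_add fun ε hε => ?_
  have hε2 : 0 < ε / 2 := by positivity
  obtain ⟨x1, hx1, hlt1⟩ := Real.lt_sInf_add_pos (fracSet_nonempty (G.induce s)) hε2
  obtain ⟨x2, hx2, hlt2⟩ := Real.lt_sInf_add_pos (fracSet_nonempty (G.induce sᶜ)) hε2
  obtain ⟨a1, b1, hb1, hc1, rfl⟩ := hx1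
  obtain ⟨a2, b2, hb2, hc2, rfl⟩ := hx2
  have h1 : HasFoldColoring (G.induce s) (a1 * b2) (b1 * b2) := fold_blowup _ _ hc1
  have h2 : HasFoldColoring (G.induce sᶜ) (a2 * b1) (b1 * b2) := by
    rw [mul_comm b1 b2]; exact fold_blowup _ _ hc2
  have hcomb := fold_join G s h1 h2
  have hb : 0 < b1 * b2 := Nat.mul_pos hb1 hb2
  refine (fracChrom_le G hb hcomb).trans ?_
  have hb1' : (0:ℝ) < b1 := by exact_mod_cast hb1
  have hb2' : (0:ℝ) < b2 := by exact_mod_cast hb2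
  have hval : ((a1 * b2 + a2 * b1 : ℕ) : ℝ) / ((b1 * b2 : ℕ) : ℝ)
      = (a1:ℝ)/b1 + (a2:ℝ)/b2 := by
    push_cast
    field_simp
  rw [hval]
  have hs1 : (a1:ℝ)/b1 < fracChrom (G.induce s) + ε/2 := hlt1
  have hs2 : (a2:ℝ)/b2 < fracChrom (G.induce sᶜ) + ε/2 := hlt2
  linarith

/-- If `G` or its complement is disconnected and `χ_f(G) > Ξ(G)`, then `G` has a
proper induced subgraph `S` with `χ_f(S) > Ξ(S)`. -/
theorem stmt14 {V : Type*} [Fintype V] (G : SimpleGraph V)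
    (hdisc : ¬ G.Connected ∨ ¬ Gᶜ.Connected)
    (hG : (Xi G : ℝ) < fracChrom G) :
    ∃ s : Set V, s ≠ Set.univ ∧ (Xi (G.induce s) : ℝ) < fracChrom (G.induce s) := by
  classical
  by_contra hcon
  push_neg at hcon
  by_cases hne : Nonempty V
  · -- nonempty case
    have key : ∀ (H : SimpleGraph V), ¬ H.Connected →
        ∃ s : Set V, s ≠ Set.univ ∧ sᶜ ≠ Set.univ ∧
          ∀ u v : V, u ∈ s → v ∉ s → ¬ H.Adj u v := by
      intro H hH
      rw [SimpleGraph.connected_iff] at hH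
      push_neg at hH
      have hpre : ¬ H.Preconnected := fun h => (hH h).false hne.some
      rw [SimpleGraph.Preconnected] at hpre
      push_neg at hpre
      obtain ⟨u₀, v₀, hno⟩ := hpre
      refine ⟨{w | H.Reachable u₀ w}, ?_, ?_, ?_⟩
      · intro h
        rw [Set.eq_univ_iff_forall] at h
        exact hno (h v₀)
      · intro h
        rw [Set.eq_univ_iff_forall] at h
        exact h u₀ (SimpleGraph.Reachable.refl u₀)
      · intro u v hu hv hadj
        exact hv (hu.trans hadj.reachable)
    rcases hdisc with hd | hd
    · obtain ⟨s, hs, hsc, hcross⟩ := key G hd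
      have h1 : fracChrom (G.induce s) ≤ (Xi (G.induce s) : ℝ) := hcon s hs
      have h2 : fracChrom (G.induce sᶜ) ≤ (Xi (G.induce sᶜ) : ℝ) := hcon sᶜ hsc
      have hx1 : (Xi (G.induce s) : ℝ) ≤ (Xi G : ℝ) := by
        exact_mod_cast Xi_induce_le G s
      have hx2 : (Xi (G.induce sᶜ) : ℝ) ≤ (Xi G : ℝ) := by
        exact_mod_cast Xi_induce_le G sᶜ
      have hu := fracChrom_union_le G s hcross
      have : fracChrom G ≤ (Xi G : ℝ) :=
        hu.trans (max_le (h1.trans hx1) (h2.trans hx2))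
      linarith
    · obtain ⟨s, hs, hsc, hcross⟩ := key Gᶜ hd
      have hcross' : ∀ u v : V, u ∈ s → v ∉ s → G.Adj u v := by
        intro u v hu hv
        by_contra hadj
        have hne' : u ≠ v := fun h => hv (h ▸ hu)
        exact hcross u v hu hv ((SimpleGraph.compl_adj G u v).mpr ⟨hne', hadj⟩)
      have h1 : fracChrom (G.induce s) ≤ (Xi (G.induce s) : ℝ) := hcon s hs
      have h2 : fracChrom (G.induce sᶜ) ≤ (Xi (G.induce sᶜ) : ℝ) := hcon sᶜ hsc
      have hj := fracChrom_join_le G s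
      have hxi : (Xi (G.induce s) : ℝ) + (Xi (G.induce sᶜ) : ℝ) ≤ (Xi G : ℝ) := by
        exact_mod_cast xi_join_lower G s hcross'
      linarith
  · haveI : IsEmpty V := not_nonempty_iff.mp hne
    have h0 : HasFoldColoring G 0 1 :=
      ⟨fun v => isEmptyElim v, fun v => isEmptyElim v, fun u => isEmptyElim u⟩
    have hle := fracChrom_le G one_pos h0
    have : fracChrom G ≤ 0 := by simpa using hle
    have hx : (0:ℝ) ≤ (Xi G : ℝ) := Nat.cast_nonneg _
    linarith
end
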